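/- arXiv:2403.04016 — 2 statements merged into one kernel-verified Lean document; each statement's English description precedes it below -/
import Mathlib

section
/- Let A ∈ ℝ^{n×n}, B ∈ ℝ^{n×m}, C ∈ ℝ^{m×n}, D ∈ ℝ^{m×m}, and suppose x ∈ ℝ^n, w ∈ ℝ^m and λ ≥ 0 satisfy: (x, w) ≠ 0, A x + B w = λ x, w − (C x + D w) ≥ 0 entrywise, w ≥ 0 entrywise, and (w − (C x + D w)) ⊙ w = 0. Then for every integer N ≥ 1, the matrices ℋ_i := λ^i (x, w)(x, w)^T ∈ S^{n+m}, i = 0, …, 2(N−1), satisfy all constraints of the N-th order LMI relaxation: the N×N block Hankel matrix H̃_N with (i,j) block ℋ_{i+j−2} equals v_N v_N^T with v_N = (x, w, λ x, λ w, …, λ^{N−1} x, λ^{N−1} w), hence is positive semidefinite and nonzero; each ℋ_i is positive semidefinite; [A B] ℋ_i = [I_n 0] ℋ_{i+1} for i = 0,…,2N−3; [A B] ℋ_{2(N−1)} [I_n 0]^T + ([A B] ℋ_{2(N−1)} [I_n 0]^T)^T is positive semidefinite; the matrix [[-C, I_m − D],[0, I_m]] ℋ_i [[-C, I_m − D],[0,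 I_m]]^T has all entries nonnegative for each i; and every diagonal entry of [−C, I_m − D] ℋ_i [0, I_m]^T is zero for each i. -/
open Matrix

/-- The `N×N` block Hankel matrix whose `(i,j)` block is `H (i+j)`. -/
def hankelBlock {n m : ℕ} (H : ℕ → Matrix (Fin n ⊕ Fin m) (Fin n ⊕ Fin m) ℝ) (N : ℕ) :
    Matrix (Fin N × (Fin n ⊕ Fin m)) (Fin N × (Fin n ⊕ Fin m)) ℝ :=
  fun p q => H ((p.1 : ℕ) + (q.1 : ℕ)) p.2 q.2

section Helpers

variable {p q r ι : Type*} [Fintype q] [Fintype ι]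

lemma mul_vecMulVec' (M : Matrix p q ℝ) (a : q → ℝ) (b : r → ℝ) :
    M * vecMulVec a b = vecMulVec (M *ᵥ a) b := by
  ext i j
  simp [mul_apply, vecMulVec_apply, mulVec, dotProduct, Finset.sum_mul, mul_assoc]

lemma vecMulVec_mul_transpose' (a : p → ℝ) (b : q → ℝ) (N : Matrix r q ℝ) :
    vecMulVec a b * Nᵀ = vecMulVec a (N *ᵥ b) := by
  ext i j
  simp [mul_apply, vecMulVec_apply, mulVec, dotProduct, Finset.mul_sum, mul_comm, mul_left_comm]

lemma smul_vecMulVec' (c : ℝ) (a : p → ℝ) (b : r → ℝ) :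
    vecMulVec (c • a) b = c • vecMulVec a b := by
  ext i j
  simp [vecMulVec_apply, mul_assoc]

lemma psd_vecMulVec (v : ι → ℝ) : (vecMulVec v v).PosSemidef := by
  rw [posSemidef_iff_dotProduct_mulVec]
  constructor
  · ext i j
    simp [conjTranspose_apply, vecMulVec_apply, mul_comm]
  · intro y
    have : vecMulVec v v *ᵥ y = (v ⬝ᵥ y) • v := by
      ext i
      simp [mulVec, vecMulVec_apply, dotProduct, Finset.mul_sum, Finset.sum_mul]
      apply Finset.sum_congr rfl; intro k _; ring
    rw [this]
    simp only [star_trivial, dotProduct_smul]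
    have : y ⬝ᵥ v = v ⬝ᵥ y := dotProduct_comm _ _
    rw [smul_eq_mul, this]
    exact mul_self_nonneg _

lemma psd_smul_nonneg {M : Matrix ι ι ℝ} (h : M.PosSemidef) {c : ℝ} (hc : 0 ≤ c) :
    (c • M).PosSemidef := by
  rw [posSemidef_iff_dotProduct_mulVec]
  constructor
  · ext i j
    have := congrFun (congrFun h.1 i) j
    simpa [conjTranspose_apply] using congrArg (c * ·) this
  · intro y
    rw [smul_mulVec, dotProduct_smul, smul_eq_mul]
    exact mul_nonneg hc (h.dotProduct_mulVec_nonneg y)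

lemma psd_add' {M N : Matrix ι ι ℝ} (hM : M.PosSemidef) (hN : N.PosSemidef) :
    (M + N).PosSemidef := by
  refine posSemidef_iff_dotProduct_mulVec.mpr ⟨hM.1.add hN.1, fun y => ?_⟩
  rw [add_mulVec, dotProduct_add]
  exact add_nonneg (hM.dotProduct_mulVec_nonneg y) (hN.dotProduct_mulVec_nonneg y)

end Helpers

/-- If `(x, w) ≠ 0`, `A x + B w = λ x`, `w − (C x + D w) ≥ 0`, `w ≥ 0` and
`(w − (C x + D w)) ⊙ w = 0` with `λ ≥ 0`, then the matrices `ℋ_i = λ^i (x,w)(x,w)ᵀ`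
satisfy all constraints of the `N`-th order LMI relaxation. -/
theorem algebraic_solution_feasible_for_relaxation {n m : ℕ}
    (A : Matrix (Fin n) (Fin n) ℝ) (B : Matrix (Fin n) (Fin m) ℝ)
    (C : Matrix (Fin m) (Fin n) ℝ) (D : Matrix (Fin m) (Fin m) ℝ)
    (x : Fin n → ℝ) (w : Fin m → ℝ) (lam : ℝ) (hlam : 0 ≤ lam)
    (hne : Sum.elim x w ≠ 0)
    (heig : A.mulVec x + B.mulVec w = lam • x)
    (hge1 : ∀ i, 0 ≤ w i - (C.mulVec x + D.mulVec w) i)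
    (hge2 : ∀ i, 0 ≤ w i)
    (hhad : ∀ i, (w i - (C.mulVec x + D.mulVec w) i) * w i = 0)
    (N : ℕ) (hN : 1 ≤ N)
    (H : ℕ → Matrix (Fin n ⊕ Fin m) (Fin n ⊕ Fin m) ℝ)
    (hH : ∀ i, H i = lam ^ i • vecMulVec (Sum.elim x w) (Sum.elim x w)) :
    hankelBlock H N =
      vecMulVec (fun p : Fin N × (Fin n ⊕ Fin m) => lam ^ (p.1 : ℕ) * Sum.elim x w p.2)
        (fun p : Fin N × (Fin n ⊕ Fin m) => lam ^ (p.1 : ℕ) * Sum.elim x w p.2) ∧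
    (hankelBlock H N).PosSemidef ∧
    hankelBlock H N ≠ 0 ∧
    (∀ i, i + 2 ≤ 2 * N → (H i).PosSemidef) ∧
    (∀ i, i + 3 ≤ 2 * N →
      fromCols A B * H i = fromCols (1 : Matrix (Fin n) (Fin n) ℝ) 0 * H (i + 1)) ∧
    (fromCols A B * H (2 * (N - 1)) * (fromCols (1 : Matrix (Fin n) (Fin n) ℝ) 0)ᵀ +
      (fromCols A B * H (2 * (N - 1)) *
        (fromCols (1 : Matrix (Fin n) (Fin n) ℝ) 0)ᵀ)ᵀ).PosSemidef ∧
    (∀ i, i + 2 ≤ 2 * N → ∀ a b,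
      0 ≤ (fromBlocks (-C) (1 - D) 0 (1 : Matrix (Fin m) (Fin m) ℝ) * H i *
        (fromBlocks (-C) (1 - D) 0 (1 : Matrix (Fin m) (Fin m) ℝ))ᵀ) a b) ∧
    (∀ i, i + 2 ≤ 2 * N → ∀ j : Fin m,
      (fromCols (-C) (1 - D) * H i *
        (fromCols (0 : Matrix (Fin m) (Fin n) ℝ) 1)ᵀ : Matrix (Fin m) (Fin m) ℝ) j j = 0) := by
  set v : Fin n ⊕ Fin m → ℝ := Sum.elim x w with hv
  set g : Fin m → ℝ := fun j => w j - (C.mulVec x + D.mulVec w) j with hg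
  have hv1 : fromCols A B *ᵥ v = lam • x := by
    rw [hv, fromCols_mulVec_sumElim, heig]
  have hv2 : fromCols (1 : Matrix (Fin n) (Fin n) ℝ) 0 *ᵥ v = x := by
    rw [hv, fromCols_mulVec_sumElim]; simp
  have hv3 : fromCols (-C) (1 - D) *ᵥ v = g := by
    rw [hv, fromCols_mulVec_sumElim]
    funext j
    simp [hg, neg_mulVec, sub_mulVec]
    ring
  have hv4 : fromCols (0 : Matrix (Fin m) (Fin n) ℝ) 1 *ᵥ v = w := by
    rw [hv, fromCols_mulVec_sumElim]; simp
  have hv5 : fromBlocks (-C) (1 - D) 0 (1 : Matrix (Fin m) (Fin m) ℝ) *ᵥ v = Sum.elim g w := by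
    rw [hv, fromBlocks_mulVec]
    funext j
    cases j with
    | inl j => simp [hg, neg_mulVec, sub_mulVec]; ring
    | inr j => simp
  -- Goal 1
  have h1 : hankelBlock H N =
      vecMulVec (fun p : Fin N × (Fin n ⊕ Fin m) => lam ^ (p.1 : ℕ) * Sum.elim x w p.2)
        (fun p : Fin N × (Fin n ⊕ Fin m) => lam ^ (p.1 : ℕ) * Sum.elim x w p.2) := by
    ext ⟨i, p⟩ ⟨j, q⟩
    simp [hankelBlock, hH, vecMulVec_apply, pow_add]
    ring
  refine ⟨h1, ?_, ?_, ?_, ?_, ?_, ?_, ?_⟩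
  · rw [h1]; exact psd_vecMulVec _
  · intro h0
    obtain ⟨k, hk⟩ := Function.ne_iff.mp hne
    have := congrFun (congrFun h0 (⟨0, hN⟩, k)) (⟨0, hN⟩, k)
    simp [hankelBlock, hH, vecMulVec_apply] at this
    exact hk this
  · intro i _
    rw [hH]
    exact psd_smul_nonneg (psd_vecMulVec v) (pow_nonneg hlam i)
  · intro i _
    erw [hH i, hH (i + 1), Matrix.mul_smul, Matrix.mul_smul, mul_vecMulVec', mul_vecMulVec',
      hv1, hv2, smul_vecMulVec', smul_smul, ← pow_succ]
  · have key : fromCols A B * H (2 * (N - 1)) *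
        (fromCols (1 : Matrix (Fin n) (Fin n) ℝ) 0)ᵀ =
        (lam ^ (2 * (N - 1)) * lam) • vecMulVec x x := by
      erw [hH, Matrix.mul_smul, Matrix.smul_mul, mul_vecMulVec', vecMulVec_mul_transpose',
        hv1, hv2, smul_vecMulVec', smul_smul]
    rw [key]
    have hpsd : ((lam ^ (2 * (N - 1)) * lam) • vecMulVec x x).PosSemidef :=
      psd_smul_nonneg (psd_vecMulVec x) (mul_nonneg (pow_nonneg hlam _) hlam)
    exact psd_add' hpsd hpsd.transpose
  · intro i _ a b
    rw [hH, Matrix.mul_smul, Matrix.smul_mul, mul_vecMulVec', vecMulVec_mul_transpose',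
      hv5]
    have key : ∀ c : Fin m ⊕ Fin m, 0 ≤ Sum.elim g w c := by
      intro c
      cases c with
      | inl j => simpa [hg, sub_nonneg, Pi.add_apply] using hge1 j
      | inr j => simpa using hge2 j
    simpa [vecMulVec_apply] using
      mul_nonneg (pow_nonneg hlam i) (mul_nonneg (key a) (key b))
  · intro i _ j
    erw [hH, Matrix.mul_smul, Matrix.smul_mul, mul_vecMulVec', vecMulVec_mul_transpose',
      hv3, hv4]
    simp only [Matrix.smul_apply, vecMulVec_apply, smul_eq_mul]
    rw [show g j * w j = 0 from hhad j, mul_zero]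
end

section
/- Let A ∈ ℝ^{n×n}, B ∈ ℝ^{n×m}, C ∈ ℝ^{m×n}, D ∈ ℝ^{m×m} with ‖D‖ < 1, and let N ≥ 1 be an integer. Suppose matrices ℋ_0, …, ℋ_{2(N−1)} ∈ S^{n+m} satisfy the N-th order LMI relaxation: the N×N block Hankel matrix H̃_N with (i,j) block ℋ_{i+j−2} is positive semidefinite, nonzero, and of rank one; each ℋ_i is positive semidefinite; [A B] ℋ_i = [I_n 0] ℋ_{i+1} for i = 0,…,2N−3; [A B] ℋ_{2(N−1)} [I_n 0]^T + ([A B] ℋ_{2(N−1)} [I_n 0]^T)^T is positive semidefinite; the matrix [[-C, I_m − D],[0, I_m]] ℋ_i [[-C, I_m − D],[0, I_m]]^T has all entries nonnegative for each i; and every diagonal entry of [−C, I_m − D] ℋ_i [0, I_m]^T is zero for each i. Then there exist x ∈ ℝ^n with x ≠ 0, w ∈ ℝ^m with w ≥ 0 entrywise, and λ ≥ 0 such that A x + B w = λ x, w = Φ(C x + D w), and H̃_N = v_N v_N^T with v_N = (x, w, λ x, λ w, …, λ^{N−1} x, λ^{N−1} w). -/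
open Matrix

/-- The rectified linear unit (ReLU) map, applied componentwise. -/
noncomputable def relu {m : ℕ} (q : Fin m → ℝ) : Fin m → ℝ := fun i => max (q i) 0

/-- The operator norm of a matrix induced by the Euclidean norm on `ℝ^m`. -/
noncomputable def opNorm {m : ℕ} (D : Matrix (Fin m) (Fin m) ℝ) : ℝ :=
  ‖Matrix.toEuclideanCLM (𝕜 := ℝ) D‖

section Helpers

lemma myMul_vecMulVec {k l j : Type*} [Fintype l] (P : Matrix k l ℝ) (u : l → ℝ) (v : j → ℝ) :
    P * vecMulVec u v = vecMulVec (P *ᵥ u) v := by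
  ext a b
  simp only [mul_apply, vecMulVec_apply, mulVec, dotProduct, Finset.sum_mul]
  exact Finset.sum_congr rfl fun c _ => by ring

lemma myVecMulVec_mul {k l j : Type*} [Fintype l] (u : k → ℝ) (v : l → ℝ) (Q : Matrix j l ℝ) :
    vecMulVec u v * Qᵀ = vecMulVec u (Q *ᵥ v) := by
  ext a b
  simp only [mul_apply, vecMulVec_apply, transpose_apply, mulVec, dotProduct, Finset.mul_sum]
  exact Finset.sum_congr rfl fun c _ => by ring

lemma psd_rank_one {ι : Type*} [Fintype ι] [DecidableEq ι] (M : Matrix ι ι ℝ)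
    (hpsd : M.PosSemidef) (hne : M ≠ 0) (hrk : M.rank = 1) :
    ∃ u : ι → ℝ, u ≠ 0 ∧ ∀ a b, M a b = u a * u b := by
  have hsym : ∀ a b, M a b = M b a := by
    intro a b
    conv_lhs => rw [← hpsd.1]
    simp [conjTranspose_apply]
  -- all 2x2 minors vanish
  have h2 : ∀ f g : Fin 2 → ι, (M.submatrix f g).det = 0 := by
    intro f g
    by_contra hd
    have hunit : IsUnit (M.submatrix f g) :=
      (Matrix.isUnit_iff_isUnit_det _).mpr (isUnit_iff_ne_zero.mpr hd)
    have hcard : (M.submatrix f g).rank = 2 := by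
      rw [Matrix.rank_of_isUnit _ hunit, Fintype.card_fin]
    have hP : M.submatrix f g =
        (Matrix.of fun (i : Fin 2) (c : ι) => if c = f i then (1 : ℝ) else 0) * M *
        (Matrix.of fun (c : ι) (j : Fin 2) => if c = g j then (1 : ℝ) else 0) := by
      ext i j
      simp [mul_apply, Finset.sum_ite_eq, Finset.sum_ite_eq', ite_mul, mul_ite,
        Finset.mul_sum, Finset.sum_mul]
    have hle : (M.submatrix f g).rank ≤ 1 := by
      rw [hP]
      refine le_trans (Matrix.rank_mul_le_left _ _) (le_trans (Matrix.rank_mul_le_right _ _) ?_)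
      exact le_of_eq hrk
    omega
  have hminor : ∀ i a j, M i a * M a j = M i j * M a a := by
    intro i a j
    have h := h2 ![i, a] ![a, j]
    rw [Matrix.det_fin_two] at h
    simp only [Matrix.submatrix_apply, Matrix.cons_val_zero, Matrix.cons_val_one,
      Matrix.head_cons] at h
    linarith
  -- find a with M a a ≠ 0
  obtain ⟨i, j, hij⟩ : ∃ i j, M i j ≠ 0 := by
    by_contra h
    push_neg at h
    exact hne (by ext i j; exact h i j)
  have haa : M i i ≠ 0 := by
    intro h0
    have h := hminor i j i
    rw [h0, zero_mul, hsym j i] at h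
    exact hij (by nlinarith)
  have hpos : 0 < M i i := by
    rcases lt_or_gt_of_ne haa with h | h
    · exfalso
      have hq := hpsd.dotProduct_mulVec_nonneg (Pi.single i 1)
      simp [mulVec, dotProduct, Pi.single_apply] at hq
      nlinarith
    · exact h
  refine ⟨fun a => M a i / Real.sqrt (M i i), ?_, ?_⟩
  · intro h
    have := congrFun h i
    simp only [Pi.zero_apply, div_eq_zero_iff] at this
    rcases this with h | h
    · exact haa h
    · exact (Real.sqrt_ne_zero'.mpr hpos) h
  · intro a b
    have h := hminor a i b
    rw [hsym i b] at h
    field_simp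
    rw [Real.sq_sqrt hpos.le]
    linarith

end Helpers

section Helpers2

lemma signSelect {m : ℕ} (s w : Fin m → ℝ) (hss : ∀ i j, 0 ≤ s i * s j)
    (hsw : ∀ i j, 0 ≤ s i * w j) (hww : ∀ i j, 0 ≤ w i * w j) :
    ∃ σ : ℝ, (σ = 1 ∨ σ = -1) ∧ (∀ i, 0 ≤ σ * w i) ∧ (∀ i, 0 ≤ σ * s i) := by
  by_cases hw : ∃ k, w k ≠ 0
  · obtain ⟨k, hk⟩ := hw
    rcases lt_or_gt_of_ne hk with hneg | hpos
    · refine ⟨-1, Or.inr rfl, fun i => ?_, fun i => ?_⟩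
      · have := hww i k; nlinarith
      · have := hsw i k; nlinarith
    · refine ⟨1, Or.inl rfl, fun i => ?_, fun i => ?_⟩
      · have := hww i k; nlinarith
      · have := hsw i k; nlinarith
  · push_neg at hw
    by_cases hs : ∃ k, s k ≠ 0
    · obtain ⟨k, hk⟩ := hs
      rcases lt_or_gt_of_ne hk with hneg | hpos
      · refine ⟨-1, Or.inr rfl, fun i => by simp [hw i], fun i => ?_⟩
        have := hss i k; nlinarith
      · refine ⟨1, Or.inl rfl, fun i => by simp [hw i], fun i => ?_⟩
        have := hss i k; nlinarith
    · push_neg at hs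
      exact ⟨1, Or.inl rfl, fun i => by simp [hw i], fun i => by simp [hs i]⟩

lemma max_aux (a b : ℝ) (ha : 0 ≤ a) (hs : 0 ≤ a - b) (h0 : a * (a - b) = 0) :
    a = max b 0 := by
  rcases ha.lt_or_eq with hpos | hzero
  · have hab : a - b = 0 := by
      rcases mul_eq_zero.mp h0 with h | h
      · exact absurd h hpos.ne'
      · exact h
    have hb : b = a := by linarith
    rw [hb, max_eq_left ha]
  · rw [← hzero, max_eq_right (by linarith)]

lemma vecMulVec_mulVec {k l : Type*} [Fintype l] (a : k → ℝ) (b z : l → ℝ) :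
    (vecMulVec a b) *ᵥ z = (b ⬝ᵥ z) • a := by
  funext i
  simp only [mulVec, dotProduct, vecMulVec_apply, Pi.smul_apply, smul_eq_mul, Finset.sum_mul]
  exact Finset.sum_congr rfl fun c _ => by ring

lemma eig_of_psd {n : ℕ} (x y : Fin n → ℝ) (hx : x ≠ 0)
    (h : (vecMulVec y x + vecMulVec x y).PosSemidef) :
    ∃ c : ℝ, 0 ≤ c ∧ y = c • x := by
  have hq : ∀ z : Fin n → ℝ, 0 ≤ (z ⬝ᵥ x) * (z ⬝ᵥ y) := by
    intro z
    have h2 := h.dotProduct_mulVec_nonneg z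
    rw [add_mulVec, _root_.vecMulVec_mulVec, _root_.vecMulVec_mulVec, dotProduct_add,
      dotProduct_smul, dotProduct_smul] at h2
    simp only [star_trivial, smul_eq_mul] at h2
    rw [dotProduct_comm x z, dotProduct_comm y z] at h2
    nlinarith [h2]
  have hxx : 0 < x ⬝ᵥ x := by
    rcases (Finset.sum_nonneg fun i _ => mul_self_nonneg (x i) :
        (0:ℝ) ≤ x ⬝ᵥ x).lt_or_eq with h' | h'
    · exact h'
    · exact absurd (dotProduct_self_eq_zero.mp h'.symm) hx
  set c := (x ⬝ᵥ y) / (x ⬝ᵥ x) with hc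
  have hcy : 0 ≤ x ⬝ᵥ y := by
    have := hq x
    nlinarith
  set z0 : Fin n → ℝ := y - c • x with hz0
  have hz0x : z0 ⬝ᵥ x = 0 := by
    simp only [hz0, sub_dotProduct, smul_dotProduct, smul_eq_mul, hc]
    rw [dotProduct_comm y x]
    field_simp
    ring
  have hz0y : z0 ⬝ᵥ y = 0 := by
    by_contra hq0
    set t : ℝ := -((x ⬝ᵥ y) + 1) / (z0 ⬝ᵥ y) with ht
    have h2 := hq (x + t • z0)
    rw [add_dotProduct, add_dotProduct, smul_dotProduct, smul_dotProduct, hz0x] at h2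
    have hval : t * (z0 ⬝ᵥ y) = -((x ⬝ᵥ y) + 1) := by
      rw [ht]; field_simp
    rw [smul_eq_mul, smul_eq_mul, hval] at h2
    nlinarith
  have hz0z0 : z0 ⬝ᵥ z0 = 0 := by
    have h' : z0 ⬝ᵥ (y - c • x) = 0 := by
      rw [dotProduct_sub, dotProduct_smul, hz0y, hz0x]
      simp
    rwa [← hz0] at h'
  have hz00 : z0 = 0 := dotProduct_self_eq_zero.mp hz0z0
  exact ⟨c, div_nonneg hcy hxx.le, sub_eq_zero.mp hz00⟩

end Helpers2


lemma relu_contraction {m : ℕ} (D : Matrix (Fin m) (Fin m) ℝ) (hD : opNorm D < 1)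
    (w : Fin m → ℝ) (h : ∀ i, w i = max ((D *ᵥ w) i) 0) : w = 0 := by
  set v : EuclideanSpace ℝ (Fin m) := (WithLp.equiv 2 (Fin m → ℝ)).symm w with hv
  have hDv : Matrix.toEuclideanCLM (𝕜 := ℝ) D v = (WithLp.equiv 2 (Fin m → ℝ)).symm (D *ᵥ w) := by
    rw [hv]
    exact toEuclideanCLM_toLp D w
  have hle : ‖v‖ ≤ ‖(WithLp.equiv 2 (Fin m → ℝ)).symm (D *ᵥ w)‖ := by
    rw [EuclideanSpace.norm_eq, EuclideanSpace.norm_eq]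
    apply Real.sqrt_le_sqrt
    apply Finset.sum_le_sum
    intro i _
    simp only [WithLp.equiv_symm_apply, WithLp.ofLp_toLp, Real.norm_eq_abs, sq_abs]
    have hwi := h i
    have h1 : 0 ≤ w i := by rw [hwi]; exact le_max_right _ _
    have h2 : w i ≤ |(D *ᵥ w) i| := by
      rw [hwi]
      exact max_le (le_abs_self _) (abs_nonneg _)
    have hvw : v i = w i := rfl
    rw [hvw]
    nlinarith [abs_nonneg ((D *ᵥ w) i), sq_abs ((D *ᵥ w) i)]
  have hop : ‖(WithLp.equiv 2 (Fin m → ℝ)).symm (D *ᵥ w)‖ ≤ opNorm D * ‖v‖ := by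
    rw [← hDv]
    exact (Matrix.toEuclideanCLM (𝕜 := ℝ) D).le_opNorm v
  have hv0 : ‖v‖ = 0 := by
    by_contra hne
    have hpos : 0 < ‖v‖ := lt_of_le_of_ne (norm_nonneg v) (Ne.symm hne)
    have : ‖v‖ < ‖v‖ := lt_of_le_of_lt (le_trans hle hop)
      (by nlinarith)
    exact lt_irrefl _ this
  have : v = 0 := norm_eq_zero.mp hv0
  funext i
  have := congrFun (congrArg (WithLp.equiv 2 (Fin m → ℝ)) this) i
  simpa [hv] using this
lemma extract_relu {n m : ℕ} (C : Matrix (Fin m) (Fin n) ℝ) (D : Matrix (Fin m) (Fin m) ℝ)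
    (v : Fin n ⊕ Fin m → ℝ) (K : Matrix (Fin n ⊕ Fin m) (Fin n ⊕ Fin m) ℝ)
    (hK : ∀ a b, K a b = v a * v b)
    (hnn : ∀ a b, 0 ≤ (fromBlocks (-C) (1 - D) 0 (1 : Matrix (Fin m) (Fin m) ℝ) * K *
        (fromBlocks (-C) (1 - D) 0 (1 : Matrix (Fin m) (Fin m) ℝ))ᵀ) a b)
    (hdg : ∀ j, (fromCols (-C) (1 - D) * K *
        (fromCols (0 : Matrix (Fin m) (Fin n) ℝ) 1)ᵀ : Matrix (Fin m) (Fin m) ℝ) j j = 0) :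
    ∃ σ : ℝ, (σ = 1 ∨ σ = -1) ∧ (∀ i, 0 ≤ σ * v (Sum.inr i)) ∧
      (fun i => σ * v (Sum.inr i)) =
        relu (C *ᵥ (fun i => σ * v (Sum.inl i)) + D *ᵥ (fun i => σ * v (Sum.inr i))) := by
  classical
  set p : Fin n → ℝ := fun i => v (Sum.inl i) with hp
  set q : Fin m → ℝ := fun i => v (Sum.inr i) with hqdef
  have hvelim : v = Sum.elim p q := by funext a; cases a <;> rfl
  have hKmat : K = vecMulVec v v := by ext a b; rw [vecMulVec_apply]; exact hK a b
  set s : Fin m → ℝ := (-C) *ᵥ p + (1 - D) *ᵥ q with hs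
  have hT : (fromBlocks (-C) (1 - D) 0 (1 : Matrix (Fin m) (Fin m) ℝ)) *ᵥ v = Sum.elim s q := by
    rw [hvelim, fromBlocks_mulVec]
    simp only [Sum.elim_comp_inl, Sum.elim_comp_inr, zero_mulVec, one_mulVec, zero_add]
    rfl
  have h1 : fromCols (-C) (1 - D) *ᵥ v = s := by
    rw [hvelim, fromCols_mulVec_sumElim]
  have h2 : fromCols (0 : Matrix (Fin m) (Fin n) ℝ) 1 *ᵥ v = q := by
    rw [hvelim, fromCols_mulVec_sumElim, zero_mulVec, one_mulVec, zero_add]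
  have hnn' : ∀ a b, 0 ≤ Sum.elim s q a * Sum.elim s q b := by
    intro a b
    have h := hnn a b
    rwa [hKmat, myMul_vecMulVec, myVecMulVec_mul, hT, vecMulVec_apply] at h
  have hsq : ∀ j, s j * q j = 0 := by
    intro j
    have h := hdg j
    erw [hKmat, myMul_vecMulVec, myVecMulVec_mul, h1, h2, vecMulVec_apply] at h; exact h
  obtain ⟨σ, hσ, hσq, hσs⟩ := signSelect s q (fun i j => hnn' (Sum.inl i) (Sum.inl j))
      (fun i j => hnn' (Sum.inl i) (Sum.inr j)) (fun i j => hnn' (Sum.inr i) (Sum.inr j))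
  have hσ2 : σ * σ = 1 := by rcases hσ with h | h <;> rw [h] <;> norm_num
  refine ⟨σ, hσ, hσq, ?_⟩
  have hsi : ∀ i, s i = q i - ((C *ᵥ p) i + (D *ᵥ q) i) := by
    intro i
    rw [hs]
    simp only [Pi.add_apply, neg_mulVec, sub_mulVec, one_mulVec, Pi.neg_apply, Pi.sub_apply]
    ring
  funext i
  have hCp : C *ᵥ (fun i => σ * v (Sum.inl i)) = σ • (C *ᵥ p) := by
    rw [show (fun i => σ * v (Sum.inl i)) = σ • p from rfl, mulVec_smul]
  have hDq : D *ᵥ (fun i => σ * v (Sum.inr i)) = σ • (D *ᵥ q) := by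
    rw [show (fun i => σ * v (Sum.inr i)) = σ • q from rfl, mulVec_smul]
  show σ * q i = relu _ i
  rw [relu]
  simp only [hCp, hDq, Pi.add_apply, Pi.smul_apply, smul_eq_mul]
  have hb : σ * (C *ᵥ p) i + σ * (D *ᵥ q) i = σ * ((C *ᵥ p) i + (D *ᵥ q) i) := by ring
  rw [hb]
  have hsub : σ * q i - σ * ((C *ᵥ p) i + (D *ᵥ q) i) = σ * s i := by
    rw [hsi i]; ring
  apply max_aux _ _ (hσq i)
  · rw [hsub]; exact hσs i
  · rw [hsub]
    linear_combination (q i * s i) * hσ2 + hsq i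

lemma inr_zero_of_inl_zero {n m : ℕ} (C : Matrix (Fin m) (Fin n) ℝ)
    (D : Matrix (Fin m) (Fin m) ℝ) (hD : opNorm D < 1)
    (v : Fin n ⊕ Fin m → ℝ) (K : Matrix (Fin n ⊕ Fin m) (Fin n ⊕ Fin m) ℝ)
    (hK : ∀ a b, K a b = v a * v b)
    (hnn : ∀ a b, 0 ≤ (fromBlocks (-C) (1 - D) 0 (1 : Matrix (Fin m) (Fin m) ℝ) * K *
        (fromBlocks (-C) (1 - D) 0 (1 : Matrix (Fin m) (Fin m) ℝ))ᵀ) a b)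
    (hdg : ∀ j, (fromCols (-C) (1 - D) * K *
        (fromCols (0 : Matrix (Fin m) (Fin n) ℝ) 1)ᵀ : Matrix (Fin m) (Fin m) ℝ) j j = 0)
    (hinl : ∀ i, v (Sum.inl i) = 0) : ∀ i, v (Sum.inr i) = 0 := by
  obtain ⟨σ, hσ, hσq, hrelu⟩ := extract_relu C D v K hK hnn hdg
  have hσne : σ ≠ 0 := by rcases hσ with h | h <;> rw [h] <;> norm_num
  have hp0 : (fun i => σ * v (Sum.inl i)) = (0 : Fin n → ℝ) := by
    funext i; simp [hinl i]
  rw [hp0, mulVec_zero, zero_add] at hrelu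
  have hw0 : (fun i => σ * v (Sum.inr i)) = 0 :=
    relu_contraction D hD _ (fun i => congrFun hrelu i)
  intro i
  have h := congrFun hw0 i
  simp only [Pi.zero_apply, mul_eq_zero] at h
  rcases h with h | h
  · exact absurd h hσne
  · exact h

/-- If the matrices `ℋ_0, …, ℋ_{2(N−1)}` satisfy the `N`-th order LMI relaxation and the
block Hankel matrix is nonzero of rank one, then one can extract `x ≠ 0`, `w ≥ 0` and
`λ ≥ 0` with `A x + B w = λ x`, `w = Φ(C x + D w)`, and
`H̃_N = v_N v_Nᵀ` with `v_N = (x, w, λ x, λ w, …, λ^{N−1} x, λ^{N−1} w)`. -/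
theorem relaxation_rank_one_extraction {n m : ℕ}
    (A : Matrix (Fin n) (Fin n) ℝ) (B : Matrix (Fin n) (Fin m) ℝ)
    (C : Matrix (Fin m) (Fin n) ℝ) (D : Matrix (Fin m) (Fin m) ℝ)
    (hD : opNorm D < 1)
    (N : ℕ) (hN : 1 ≤ N)
    (H : ℕ → Matrix (Fin n ⊕ Fin m) (Fin n ⊕ Fin m) ℝ)
    (hPSDblock : (hankelBlock H N).PosSemidef)
    (hne : hankelBlock H N ≠ 0)
    (hrank : (hankelBlock H N).rank = 1)
    (hPSDi : ∀ i, i + 2 ≤ 2 * N → (H i).PosSemidef)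
    (hshift : ∀ i, i + 3 ≤ 2 * N →
      fromCols A B * H i = fromCols (1 : Matrix (Fin n) (Fin n) ℝ) 0 * H (i + 1))
    (hHe : (fromCols A B * H (2 * (N - 1)) *
        (fromCols (1 : Matrix (Fin n) (Fin n) ℝ) 0)ᵀ +
      (fromCols A B * H (2 * (N - 1)) *
        (fromCols (1 : Matrix (Fin n) (Fin n) ℝ) 0)ᵀ)ᵀ).PosSemidef)
    (hnn : ∀ i, i + 2 ≤ 2 * N → ∀ a b,
      0 ≤ (fromBlocks (-C) (1 - D) 0 (1 : Matrix (Fin m) (Fin m) ℝ) * H i *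
        (fromBlocks (-C) (1 - D) 0 (1 : Matrix (Fin m) (Fin m) ℝ))ᵀ) a b)
    (hdiag : ∀ i, i + 2 ≤ 2 * N → ∀ j : Fin m,
      (fromCols (-C) (1 - D) * H i *
        (fromCols (0 : Matrix (Fin m) (Fin n) ℝ) 1)ᵀ : Matrix (Fin m) (Fin m) ℝ) j j = 0) :
    ∃ (x : Fin n → ℝ) (w : Fin m → ℝ) (lam : ℝ),
      x ≠ 0 ∧ (∀ i, 0 ≤ w i) ∧ 0 ≤ lam ∧
      A.mulVec x + B.mulVec w = lam • x ∧
      w = relu (C.mulVec x + D.mulVec w) ∧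
      hankelBlock H N =
        vecMulVec (fun p : Fin N × (Fin n ⊕ Fin m) => lam ^ (p.1 : ℕ) * Sum.elim x w p.2)
          (fun p : Fin N × (Fin n ⊕ Fin m) => lam ^ (p.1 : ℕ) * Sum.elim x w p.2) := by
  classical
  obtain ⟨u, hu0, hM⟩ := psd_rank_one _ hPSDblock hne hrank
  have hblk : ∀ (i j : Fin N) (a b : Fin n ⊕ Fin m),
      H ((i : ℕ) + (j : ℕ)) a b = u (i, a) * u (j, b) := fun i j a b => hM (i, a) (j, b)
  have hconsist : ∀ (i j k l : Fin N) (a b : Fin n ⊕ Fin m),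
      (i : ℕ) + (j : ℕ) = (k : ℕ) + (l : ℕ) →
      u (i, a) * u (j, b) = u (k, a) * u (l, b) := by
    intro i j k l a b hidx
    have e1 := hblk i j a b
    rw [hidx] at e1
    exact e1.symm.trans (hblk k l a b)
  -- minimal nonzero block index
  have hSne : ∃ k : Fin N, ∃ a, u (k, a) ≠ 0 := by
    by_contra h
    push_neg at h
    exact hu0 (funext fun p => h p.1 p.2)
  set S : Finset (Fin N) := Finset.univ.filter (fun k => ∃ a, u (k, a) ≠ 0) with hS
  have hSne' : S.Nonempty := by
    obtain ⟨k, a, h⟩ := hSne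
    exact ⟨k, by simp only [hS, Finset.mem_filter, Finset.mem_univ, true_and]; exact ⟨a, h⟩⟩
  set k₀ : Fin N := S.min' hSne' with hk₀
  obtain ⟨a₀, ha₀⟩ : ∃ a, u (k₀, a) ≠ 0 := by
    have h := S.min'_mem hSne'
    simp only [hS, Finset.mem_filter, Finset.mem_univ, true_and] at h
    exact h
  have hmin : ∀ (k : Fin N), k < k₀ → ∀ a, u (k, a) = 0 := by
    intro k hk a
    by_contra h
    have hmem : k ∈ S := by
      simp only [hS, Finset.mem_filter, Finset.mem_univ, true_and]
      exact ⟨a, h⟩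
    exact absurd (S.min'_le k hmem) (not_le.mpr hk)
  have hk₀N : (k₀ : ℕ) < N := k₀.2
  -- k₀ = 0
  have hk₀0 : (k₀ : ℕ) = 0 := by
    by_contra hpos
    have h1le : 1 ≤ (k₀ : ℕ) := Nat.one_le_iff_ne_zero.mpr hpos
    set km : Fin N := ⟨(k₀ : ℕ) - 1, by omega⟩ with hkm
    have hkmval : (km : ℕ) = (k₀ : ℕ) - 1 := rfl
    have hkmlt : km < k₀ := by rw [Fin.lt_def, hkmval]; omega
    by_cases hcase : (k₀ : ℕ) + 1 < N
    · -- interior case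
      set kp : Fin N := ⟨(k₀ : ℕ) + 1, by omega⟩ with hkp
      have hkpval : (kp : ℕ) = (k₀ : ℕ) + 1 := rfl
      have h := hconsist k₀ k₀ km kp a₀ a₀ (by rw [hkmval, hkpval]; omega)
      rw [hmin km hkmlt a₀, zero_mul] at h
      exact ha₀ (mul_self_eq_zero.mp h)
    · -- boundary case : k₀ = N - 1
      have hlast : (k₀ : ℕ) + 1 = N := by omega
      set v : Fin n ⊕ Fin m → ℝ := fun a => u (k₀, a) with hv
      have hH0 : H ((k₀ : ℕ) + (k₀ : ℕ) - 1) = 0 := by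
        ext a b
        have e := hblk km k₀ a b
        have hIdx : (km : ℕ) + (k₀ : ℕ) = (k₀ : ℕ) + (k₀ : ℕ) - 1 := by
          rw [hkmval]; omega
        rw [hIdx, hmin km hkmlt a, zero_mul] at e
        simpa using e
      have hH1 : H ((k₀ : ℕ) + (k₀ : ℕ)) = vecMulVec v v := by
        ext a b
        rw [vecMulVec_apply]
        exact hblk k₀ k₀ a b
      have hsh := hshift ((k₀ : ℕ) + (k₀ : ℕ) - 1) (by omega)
      have hidx2 : (k₀ : ℕ) + (k₀ : ℕ) - 1 + 1 = (k₀ : ℕ) + (k₀ : ℕ) := by omega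
      erw [hH0, hidx2, hH1, Matrix.mul_zero, myMul_vecMulVec] at hsh
      have hvelim : v = Sum.elim (fun i => v (Sum.inl i)) (fun i => v (Sum.inr i)) := by
        funext a; cases a <;> rfl
      have hcol : fromCols (1 : Matrix (Fin n) (Fin n) ℝ) 0 *ᵥ v
          = fun i => v (Sum.inl i) := by
        conv_lhs => rw [hvelim]
        rw [fromCols_mulVec_sumElim, one_mulVec, zero_mulVec, add_zero]
      rw [hcol] at hsh
      have hinl : ∀ i, v (Sum.inl i) = 0 := by
        intro i
        have h := congrFun (congrFun hsh.symm i) a₀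
        rw [vecMulVec_apply] at h
        rcases mul_eq_zero.mp h with h' | h'
        · exact h'
        · exact absurd h' ha₀
      have hinr := inr_zero_of_inl_zero C D hD v (H ((k₀ : ℕ) + (k₀ : ℕ)))
          (hblk k₀ k₀) (hnn _ (by omega)) (hdiag _ (by omega)) hinl
      cases a₀ with
      | inl i => exact ha₀ (hinl i)
      | inr i => exact ha₀ (hinr i)
  -- setup at index 0
  have hz0 : k₀ = (⟨0, by omega⟩ : Fin N) := Fin.ext hk₀0
  set z0 : Fin N := ⟨0, by omega⟩ with hz0def
  rw [hz0] at ha₀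
  set u₀ : Fin n ⊕ Fin m → ℝ := fun a => u (z0, a) with hu₀
  set p₀ : Fin n → ℝ := fun i => u₀ (Sum.inl i) with hp₀
  set q₀ : Fin m → ℝ := fun i => u₀ (Sum.inr i) with hq₀
  have hu₀elim : u₀ = Sum.elim p₀ q₀ := by funext a; cases a <;> rfl
  have ha₀' : u₀ a₀ ≠ 0 := ha₀
  have hK0 : ∀ a b, H 0 a b = u₀ a * u₀ b := fun a b => hblk z0 z0 a b
  have hH0mat : H 0 = vecMulVec u₀ u₀ := by
    ext a b; rw [vecMulVec_apply]; exact hK0 a b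
  obtain ⟨σ, hσ, hσw, hrelu⟩ := extract_relu C D u₀ (H 0) hK0 (hnn 0 (by omega))
    (hdiag 0 (by omega))
  have hσ2 : σ * σ = 1 := by rcases hσ with h | h <;> rw [h] <;> norm_num
  have hσne : σ ≠ 0 := by rcases hσ with h | h <;> rw [h] <;> norm_num
  have hxne : (fun i => σ * u₀ (Sum.inl i)) ≠ (0 : Fin n → ℝ) := by
    intro hx0
    have hinl : ∀ i, u₀ (Sum.inl i) = 0 := by
      intro i
      have h := congrFun hx0 i
      simp only [Pi.zero_apply, mul_eq_zero] at h
      rcases h with h | h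
      · exact absurd h hσne
      · exact h
    have hinr := inr_zero_of_inl_zero C D hD u₀ (H 0) hK0 (hnn 0 (by omega))
      (hdiag 0 (by omega)) hinl
    cases a₀ with
    | inl i => exact ha₀' (hinl i)
    | inr i => exact ha₀' (hinr i)
  have hp₀ne : p₀ ≠ 0 := by
    intro h
    apply hxne
    funext i
    rw [show u₀ (Sum.inl i) = p₀ i from rfl, h]
    simp
  have hAB : fromCols A B *ᵥ u₀ = A *ᵥ p₀ + B *ᵥ q₀ := by
    conv_lhs => rw [hu₀elim]
    rw [fromCols_mulVec_sumElim]
  have hcol0 : fromCols (1 : Matrix (Fin n) (Fin n) ℝ) 0 *ᵥ u₀ = p₀ := by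
    conv_lhs => rw [hu₀elim]
    rw [fromCols_mulVec_sumElim, one_mulVec, zero_mulVec, add_zero]
  -- main eigen extraction
  obtain ⟨lam, hlam0, hy, hpow⟩ : ∃ lam : ℝ, 0 ≤ lam ∧
      (A *ᵥ p₀ + B *ᵥ q₀ = lam • p₀) ∧
      ∀ (k : Fin N) (b : Fin n ⊕ Fin m), u (k, b) = lam ^ (k : ℕ) * u₀ b := by
    by_cases hN2 : 2 ≤ N
    · -- N ≥ 2
      set one1 : Fin N := ⟨1, by omega⟩ with hone1
      set lam : ℝ := u (one1, a₀) / u₀ a₀ with hlam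
      have h1 : ∀ b, u (one1, b) = lam * u₀ b := by
        intro b
        have h := hconsist z0 one1 one1 z0 a₀ b (Nat.add_comm _ _)
        -- u₀ a₀ * u (one1, b) = u (one1, a₀) * u₀ b
        rw [hlam]
        field_simp
        linarith [h]
      have hpow : ∀ (k : Fin N) (b : Fin n ⊕ Fin m), u (k, b) = lam ^ (k : ℕ) * u₀ b := by
        have hsuf : ∀ (kv : ℕ) (hkv : kv < N) (b : Fin n ⊕ Fin m),
            u (⟨kv, hkv⟩, b) = lam ^ kv * u₀ b := by
          intro kv
          induction kv with
          | zero =>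
            intro hkv b
            rw [pow_zero, one_mul]
          | succ kv ih =>
            intro hkv b
            have hkv' : kv < N := by omega
            have h := hconsist ⟨kv + 1, hkv⟩ z0 ⟨kv, hkv'⟩ one1 b a₀
              (by show kv + 1 + 0 = kv + 1; omega)
            -- u (⟨kv+1⟩, b) * u₀ a₀ = u (⟨kv⟩, b) * u (one1, a₀)
            rw [ih hkv' b, h1 a₀] at h
            have h' : u (⟨kv + 1, hkv⟩, b) * u₀ a₀ = (lam ^ (kv + 1) * u₀ b) * u₀ a₀ := by
              rw [h]; ring
            exact mul_right_cancel₀ ha₀' h'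
        intro k b
        have h := hsuf (k : ℕ) k.2 b
        rwa [Fin.eta] at h
      have hH1mat : H 1 = vecMulVec u₀ (fun b => lam * u₀ b) := by
        ext a b
        rw [vecMulVec_apply]
        have h := hblk z0 one1 a b
        rw [h1 b] at h
        exact h
      have hsh := hshift 0 (by omega)
      erw [hH0mat, hH1mat, myMul_vecMulVec, myMul_vecMulVec, hAB, hcol0] at hsh
      have hy : A *ᵥ p₀ + B *ᵥ q₀ = lam • p₀ := by
        funext a
        have h := congrFun (congrFun hsh a) a₀
        rw [vecMulVec_apply, vecMulVec_apply] at h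
        have h' : (A *ᵥ p₀ + B *ᵥ q₀) a * u₀ a₀ = (lam * p₀ a) * u₀ a₀ := by
          rw [h]; ring
        have := mul_right_cancel₀ ha₀' h'
        rw [this]
        rfl
      -- nonnegativity of lam from hHe
      set kN : Fin N := ⟨N - 1, by omega⟩ with hkN
      have hkNval : (kN : ℕ) = N - 1 := rfl
      have hHlast : H (2 * (N - 1)) =
          vecMulVec (lam ^ (N - 1) • u₀) (lam ^ (N - 1) • u₀) := by
        ext a b
        rw [vecMulVec_apply]
        have h := hblk kN kN a b
        have hIdx : (kN : ℕ) + (kN : ℕ) = 2 * (N - 1) := by rw [hkNval]; omega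
        rw [hIdx] at h
        rw [h, hpow kN a, hpow kN b, hkNval]
        simp only [Pi.smul_apply, smul_eq_mul]
      have hsm1 : fromCols A B *ᵥ (lam ^ (N - 1) • u₀) = lam ^ (N - 1) • (lam • p₀) := by
        rw [mulVec_smul, hAB, hy]
      have hsm2 : fromCols (1 : Matrix (Fin n) (Fin n) ℝ) 0 *ᵥ (lam ^ (N - 1) • u₀)
          = lam ^ (N - 1) • p₀ := by
        rw [mulVec_smul, hcol0]
      erw [hHlast, myMul_vecMulVec, myVecMulVec_mul, hsm1, hsm2] at hHe
      have hq := hHe.dotProduct_mulVec_nonneg p₀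
      have htr : (vecMulVec (lam ^ (N - 1) • (lam • p₀)) (lam ^ (N - 1) • p₀))ᵀ
          = vecMulVec (lam ^ (N - 1) • p₀) (lam ^ (N - 1) • (lam • p₀)) := by
        ext a b; simp only [transpose_apply, vecMulVec_apply]; ring
      rw [htr, add_mulVec, _root_.vecMulVec_mulVec, _root_.vecMulVec_mulVec, dotProduct_add] at hq
      simp only [star_trivial, dotProduct_smul, smul_dotProduct, smul_eq_mul,
        Pi.smul_apply] at hq
      have hdd : 0 < p₀ ⬝ᵥ p₀ := by
        rcases (Finset.sum_nonneg fun i _ => mul_self_nonneg (p₀ i) :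
            (0:ℝ) ≤ p₀ ⬝ᵥ p₀).lt_or_eq with h' | h'
        · exact h'
        · exact absurd (dotProduct_self_eq_zero.mp h'.symm) hp₀ne
      have hpm : lam ^ (N - 1) * lam ^ (N - 1) * lam = lam ^ (2 * (N - 1) + 1) := by
        rw [← pow_add, ← pow_succ]
        congr 1
        omega
      have hq' : 0 ≤ 2 * lam ^ (2 * (N - 1) + 1) * ((p₀ ⬝ᵥ p₀) * (p₀ ⬝ᵥ p₀)) := by
        refine le_of_le_of_eq hq ?_
        rw [← hpm]; ring
      have hlamnn : 0 ≤ lam ^ (2 * (N - 1) + 1) := by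
        nlinarith [hq', mul_pos hdd hdd]
      have hlam0 : 0 ≤ lam := by
        by_contra hneg
        push_neg at hneg
        have hodd : Odd (2 * (N - 1) + 1) := ⟨N - 1, by ring⟩
        have := Odd.pow_neg hodd hneg
        linarith
      exact ⟨lam, hlam0, hy, hpow⟩
    · -- N = 1
      have hN1 : N = 1 := by omega
      have hNm1 : 2 * (N - 1) = 0 := by omega
      erw [hNm1, hH0mat, myMul_vecMulVec, myVecMulVec_mul, hAB, hcol0] at hHe
      have htr : (vecMulVec (A *ᵥ p₀ + B *ᵥ q₀) p₀)ᵀ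
          = vecMulVec p₀ (A *ᵥ p₀ + B *ᵥ q₀) := by
        ext a b; simp only [transpose_apply, vecMulVec_apply]; ring
      rw [htr] at hHe
      obtain ⟨c, hc0, hyc⟩ := eig_of_psd p₀ (A *ᵥ p₀ + B *ᵥ q₀) hp₀ne hHe
      refine ⟨c, hc0, hyc, ?_⟩
      intro k b
      have hk0 : k = z0 := by
        apply Fin.ext
        have := k.2
        omega
      rw [hk0]
      have : (z0 : ℕ) = 0 := rfl
      rw [this, pow_zero, one_mul]
  -- assemble the result
  refine ⟨fun i => σ * u₀ (Sum.inl i), fun i => σ * u₀ (Sum.inr i), lam, hxne, hσw, hlam0,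
    ?_, hrelu, ?_⟩
  · -- eigen equation
    funext i
    have h1 : A *ᵥ (fun i => σ * u₀ (Sum.inl i)) = σ • (A *ᵥ p₀) := by
      rw [show (fun i => σ * u₀ (Sum.inl i)) = σ • p₀ from rfl, mulVec_smul]
    have h2 : B *ᵥ (fun i => σ * u₀ (Sum.inr i)) = σ • (B *ᵥ q₀) := by
      rw [show (fun i => σ * u₀ (Sum.inr i)) = σ • q₀ from rfl, mulVec_smul]
    have hyi := congrFun hy i
    simp only [Pi.add_apply, Pi.smul_apply, smul_eq_mul] at hyi
    simp only [Pi.add_apply, h1, h2, Pi.smul_apply, smul_eq_mul]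
    show σ * (A *ᵥ p₀) i + σ * (B *ᵥ q₀) i = lam * (σ * u₀ (Sum.inl i))
    have : u₀ (Sum.inl i) = p₀ i := rfl
    rw [this]
    linear_combination σ * hyi
  · -- matrix identity
    ext p q
    obtain ⟨i, a⟩ := p
    obtain ⟨j, b⟩ := q
    show H ((i : ℕ) + (j : ℕ)) a b = _
    simp only [vecMulVec_apply]
    have helim : ∀ c, Sum.elim (fun i => σ * u₀ (Sum.inl i)) (fun i => σ * u₀ (Sum.inr i)) c
        = σ * u₀ c := by intro c; cases c <;> rfl
    rw [helim a, helim b, hblk i j a b, hpow i a, hpow j b]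
    linear_combination (-(lam ^ (i : ℕ) * u₀ a * lam ^ (j : ℕ) * u₀ b)) * hσ2
end
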